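/- arXiv:1809.04881 — 7 statements merged into one kernel-verified Lean document; each statement's English description precedes it below -/
import Mathlib

section
/- Every play of the Zeckendorf game terminates: there is no infinite sequence of legal moves starting from the multiset consisting of n copies of F_1. -/
/-- Fibonacci numbers indexed `F_1 = 1, F_2 = 2, F_{i+1} = F_i + F_{i-1}`. -/
def ZFib (i : ℕ) : ℕ := Nat.fib (i + 1)

/-- Legal moves of the Zeckendorf game, on multisets of Fibonacci indices. -/
inductive ZMove : Multiset ℕ → Multiset ℕ → Prop
  | combine (s : Multiset ℕ) (i : ℕ) (h : 2 ≤ i) :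
      ZMove ((i - 1) ::ₘ i ::ₘ s) ((i + 1) ::ₘ s)
  | addOnes (s : Multiset ℕ) :
      ZMove (1 ::ₘ 1 ::ₘ s) (2 ::ₘ s)
  | splitTwos (s : Multiset ℕ) :
      ZMove (2 ::ₘ 2 ::ₘ s) (1 ::ₘ 3 ::ₘ s)
  | split (s : Multiset ℕ) (i : ℕ) (h : 3 ≤ i) :
      ZMove (i ::ₘ i ::ₘ s) ((i - 2) ::ₘ (i + 1) ::ₘ s)

def Zmeasure (s : Multiset ℕ) : ℕ := (s.sum + Multiset.card s) ^ 2 + s.count 2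

lemma zkey {a a' b b' : ℕ} (h1 : a' < a) (h2 : b' ≤ a') : a' ^ 2 + b' < a ^ 2 + b := by
  nlinarith

lemma zmeasure_lt {s t : Multiset ℕ} (h : ZMove s t) : Zmeasure t < Zmeasure s := by
  have hc : ∀ u : Multiset ℕ, u.count 2 ≤ u.sum + Multiset.card u := fun u =>
    le_trans (Multiset.count_le_card 2 u) (Nat.le_add_left _ _)
  cases h with
  | combine s i hi =>
    apply zkey ?_ (hc _)
    simp only [Multiset.sum_cons, Multiset.card_cons]
    omega
  | addOnes s =>
    apply zkey ?_ (hc _)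
    simp only [Multiset.sum_cons, Multiset.card_cons]
    omega
  | splitTwos s =>
    unfold Zmeasure
    simp only [Multiset.sum_cons, Multiset.card_cons, Multiset.count_cons]
    have e1 : (2:ℕ) ≠ 3 := by omega
    have e2 : (2:ℕ) ≠ 1 := by omega
    simp [e1, e2]
    ring_nf
    omega
  | split s i hi =>
    apply zkey ?_ (hc _)
    simp only [Multiset.sum_cons, Multiset.card_cons]
    omega

/-- Every play of the Zeckendorf game terminates: there is no infinite
sequence of legal moves starting from `n` copies of `F_1`. -/
theorem zeckendorf_game_terminates (n : ℕ) :
    ¬ ∃ f : ℕ → Multiset ℕ, f 0 = Multiset.replicate n 1 ∧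
      ∀ m : ℕ, ZMove (f m) (f (m + 1)) := by
  rintro ⟨f, -, hstep⟩
  have key : ∀ m, Zmeasure (f (m + 1)) < Zmeasure (f m) := fun m => zmeasure_lt (hstep m)
  have bound : ∀ m, Zmeasure (f m) + m ≤ Zmeasure (f 0) := by
    intro m
    induction m with
    | zero => omega
    | succ k ih => have := key k; omega
  have := bound (Zmeasure (f 0) + 1)
  omega
end

section
/- A state in the Zeckendorf game admits no legal move if and only if it consists of distinct, non-adjacent Fibonacci numbers (i.e., it is a Zeckendorf decomposition). -/
/-- A state (a multiset of indices ≥ 1) admits no legal move iff it is a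
Zeckendorf decomposition: all indices distinct and no two consecutive. -/
theorem no_move_iff_zeckendorf (s : Multiset ℕ) (hs : ∀ i ∈ s, 1 ≤ i) :
    (¬ ∃ t, ZMove s t) ↔ (s.Nodup ∧ ∀ i ∈ s, i + 1 ∉ s) := by
  constructor
  · intro hno
    constructor
    · by_contra h
      rw [Multiset.nodup_iff_count_le_one] at h
      push_neg at h
      obtain ⟨a, ha⟩ := h
      have h2 : 2 ≤ s.count a := ha
      have hrep : Multiset.replicate 2 a ≤ s := Multiset.le_count_iff_replicate_le.mp h2
      obtain ⟨t, ht⟩ := Multiset.le_iff_exists_add.mp hrep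
      have hs' : s = a ::ₘ a ::ₘ t := by
        rw [ht]
        simp [Multiset.replicate_succ]
      have ha1 : 1 ≤ a := hs a (by rw [hs']; simp)
      apply hno
      rcases Nat.lt_or_ge a 3 with h3 | h3
      · interval_cases a
        · exact ⟨_, hs' ▸ ZMove.addOnes t⟩
        · exact ⟨_, hs' ▸ ZMove.splitTwos t⟩
      · exact ⟨_, hs' ▸ ZMove.split t a h3⟩
    · intro i hi hip
      apply hno
      obtain ⟨t, ht⟩ := Multiset.exists_cons_of_mem hip
      have hit : i ∈ t := by
        have h := hi; rw [ht] at h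
        rcases Multiset.mem_cons.mp h with h | h
        · omega
        · exact h
      obtain ⟨u, hu⟩ := Multiset.exists_cons_of_mem hit
      have hs' : s = ((i + 1) - 1) ::ₘ (i + 1) ::ₘ u := by
        rw [ht, hu, Multiset.cons_swap]
        norm_num
      have h1 : 1 ≤ i := hs i hi
      exact ⟨_, hs' ▸ ZMove.combine u (i + 1) (by omega)⟩
  · rintro ⟨hnd, hcons⟩ ⟨t, hm⟩
    cases hm with
    | combine s' i h =>
      apply hcons (i - 1) (by simp)
      have hi : (i - 1) + 1 = i := by omega
      rw [hi]; simp
    | addOnes s' =>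
      simp [Multiset.nodup_cons] at hnd
    | splitTwos s' =>
      simp [Multiset.nodup_cons] at hnd
    | split s' i h =>
      simp [Multiset.nodup_cons] at hnd
end

section
/- Any maximal sequence of legal moves in the Zeckendorf game starting from n copies of F_1 ends at the (unique) Zeckendorf decomposition of n. -/
lemma ZFib_pos (i : ℕ) : 0 < ZFib i := Nat.fib_pos.mpr (Nat.succ_pos i)

lemma ZFib_mono : Monotone ZFib := fun a b h => Nat.fib_mono (by omega)

lemma ZFib_add {i : ℕ} (h : 1 ≤ i) : ZFib (i - 1) + ZFib i = ZFib (i + 1) := by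
  unfold ZFib
  rw [show i - 1 + 1 = i by omega, show i + 1 + 1 = i + 2 by omega, Nat.fib_add_two]

lemma zmove_sum {s t : Multiset ℕ} (h : ZMove s t) :
    (t.map ZFib).sum = (s.map ZFib).sum := by
  cases h with
  | combine s i hi =>
      simp only [Multiset.map_cons, Multiset.sum_cons]
      have := ZFib_add (i := i) (by omega)
      omega
  | addOnes s =>
      simp only [Multiset.map_cons, Multiset.sum_cons]
      have h1 : ZFib 1 = 1 := rfl
      have h2 : ZFib 2 = 2 := rfl
      omega
  | splitTwos s =>
      simp only [Multiset.map_cons, Multiset.sum_cons]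
      have h1 : ZFib 1 = 1 := rfl
      have h2 : ZFib 2 = 2 := rfl
      have h3 : ZFib 3 = 3 := rfl
      omega
  | split s i hi =>
      simp only [Multiset.map_cons, Multiset.sum_cons]
      have h1 := ZFib_add (i := i) (by omega)
      have h2 : ZFib (i - 2) + ZFib (i - 1) = ZFib i := by
        have := ZFib_add (i := i - 1) (by omega)
        rwa [show i - 1 - 1 = i - 2 by omega, show i - 1 + 1 = i by omega] at this
      omega

lemma zmove_pos {s t : Multiset ℕ} (h : ZMove s t) (hp : ∀ i ∈ s, 1 ≤ i) :
    ∀ i ∈ t, 1 ≤ i := by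
  cases h with
  | combine s i hi =>
      intro j hj
      rcases Multiset.mem_cons.mp hj with h | h
      · omega
      · exact hp j (by simp [h])
  | addOnes s =>
      intro j hj
      rcases Multiset.mem_cons.mp hj with h | h
      · omega
      · exact hp j (by simp [h])
  | splitTwos s =>
      intro j hj
      rcases Multiset.mem_cons.mp hj with h | h
      · omega
      · rcases Multiset.mem_cons.mp h with h | h
        · omega
        · exact hp j (by simp [h])
  | split s i hi =>
      intro j hj
      rcases Multiset.mem_cons.mp hj with h | h
      · omega
      · rcases Multiset.mem_cons.mp h with h | h
        · omega
        · exact hp j (by simp [h])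

lemma terminal_struct {s : Multiset ℕ} (hp : ∀ i ∈ s, 1 ≤ i)
    (hterm : ¬ ∃ t, ZMove s t) :
    s.Nodup ∧ ∀ i ∈ s, i + 1 ∉ s := by
  constructor
  · rw [Multiset.nodup_iff_count_le_one]
    intro a
    by_contra hc
    push_neg at hc
    have hle : Multiset.replicate 2 a ≤ s := (Multiset.le_count_iff_replicate_le).mp hc
    obtain ⟨u, hu⟩ := Multiset.le_iff_exists_add.mp hle
    have hs : s = a ::ₘ a ::ₘ u := by
      rw [hu]; simp [Multiset.replicate_succ, Multiset.cons_add]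
    have ha1 : 1 ≤ a := hp a (by rw [hs]; simp)
    apply hterm
    rcases (show a = 1 ∨ a = 2 ∨ 3 ≤ a by omega) with h | h | h
    · subst h; exact ⟨_, hs ▸ ZMove.addOnes u⟩
    · subst h; exact ⟨_, hs ▸ ZMove.splitTwos u⟩
    · exact ⟨_, hs ▸ ZMove.split u a h⟩
  · intro i hi hi1
    have h1 : i + 1 ∈ s.erase i := (Multiset.mem_erase_of_ne (by omega)).mpr hi1
    have hs : s = i ::ₘ (i + 1) ::ₘ ((s.erase i).erase (i + 1)) := by
      rw [Multiset.cons_erase h1, Multiset.cons_erase hi]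
    have hi0 : 1 ≤ i := hp i hi
    apply hterm
    have := ZMove.combine ((s.erase i).erase (i + 1)) (i + 1) (by omega)
    rw [show i + 1 - 1 = i by omega] at this
    exact ⟨_, by rw [hs]; exact this⟩

lemma zsum_lt (m : ℕ) : ∀ (s : Multiset ℕ), s.Nodup → (∀ i ∈ s, i + 1 ∉ s) →
    (∀ i ∈ s, 1 ≤ i) → (∀ i ∈ s, i ≤ m) → (s.map ZFib).sum < ZFib (m + 1) := by
  induction m using Nat.strong_induction_on with
  | _ m IH =>
    intro s hnd hadj hpos hbd
    by_cases hm : m ∈ s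
    · have hm1 : 1 ≤ m := hpos m hm
      set u := s.erase m with hu
      have hs : s = m ::ₘ u := (Multiset.cons_erase hm).symm
      have hund : u.Nodup := hnd.erase m
      have humem : ∀ i ∈ u, i ∈ s := fun i hi => Multiset.mem_of_mem_erase hi
      have hnotm : m ∉ u := by
        have h := hs ▸ hnd
        exact (Multiset.nodup_cons.mp h).1
      have hubd : ∀ i ∈ u, i ≤ m - 2 := by
        intro i hi
        have h1 : i ≤ m := hbd i (humem i hi)
        have h2 : i ≠ m := fun h => hnotm (h ▸ hi)
        have h3 : i + 1 ≠ m := by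
          intro h
          exact hadj i (humem i hi) (h ▸ hm)
        omega
      rcases (show m = 1 ∨ 2 ≤ m by omega) with h1 | h2
      · have : u = 0 := by
          rcases Multiset.empty_or_exists_mem u with h | ⟨a, ha⟩
          · exact h
          · have := hpos a (humem a ha)
            have := hubd a ha
            omega
        subst h1
        rw [hs, this]
        simp only [Multiset.map_cons, Multiset.map_zero, Multiset.sum_cons,
          Multiset.sum_zero]
        decide
      · have hlt : (u.map ZFib).sum < ZFib (m - 2 + 1) :=
          IH (m - 2) (by omega) u hund
            (fun i hi h => hadj i (humem i hi) (humem _ h))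
            (fun i hi => hpos i (humem i hi)) hubd
        rw [show m - 2 + 1 = m - 1 by omega] at hlt
        have hadd : ZFib (m - 1) + ZFib m = ZFib (m + 1) := by
          unfold ZFib
          rw [show m - 1 + 1 = m by omega, show m + 1 + 1 = m + 2 by omega,
            Nat.fib_add_two]
        rw [hs]
        simp only [Multiset.map_cons, Multiset.sum_cons]
        omega
    · rcases (show m = 0 ∨ 1 ≤ m by omega) with h | h
      · have : s = 0 := by
          rcases Multiset.empty_or_exists_mem s with h' | ⟨a, ha⟩
          · exact h'
          · have := hpos a ha
            have := hbd a ha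
            omega
        subst h
        rw [this]
        simp [ZFib]
      · have hbd' : ∀ i ∈ s, i ≤ m - 1 := by
          intro i hi
          have := hbd i hi
          have : i ≠ m := fun he => hm (he ▸ hi)
          omega
        have := IH (m - 1) (by omega) s hnd hadj hpos hbd'
        rw [show m - 1 + 1 = m by omega] at this
        exact lt_of_lt_of_le this (ZFib_mono (by omega))

lemma zfib_le_sum {s : Multiset ℕ} {a : ℕ} (h : a ∈ s) : ZFib a ≤ (s.map ZFib).sum := by
  rw [← Multiset.cons_erase h, Multiset.map_cons, Multiset.sum_cons]
  exact Nat.le_add_right _ _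

lemma multiset_max (s : Multiset ℕ) (h : s ≠ 0) : ∃ a ∈ s, ∀ i ∈ s, i ≤ a := by
  induction s using Multiset.induction with
  | empty => exact absurd rfl h
  | cons a s ih =>
    rcases Multiset.empty_or_exists_mem s with h0 | ⟨b, hb⟩
    · subst h0
      exact ⟨a, by simp, by intro i hi; simp at hi; omega⟩
    · obtain ⟨c, hc, hmax⟩ := ih (by rintro rfl; simp at hb)
      rcases le_total a c with hle | hle
      · refine ⟨c, Multiset.mem_cons_of_mem hc, ?_⟩
        intro i hi
        rcases Multiset.mem_cons.mp hi with rfl | h'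
        · exact hle
        · exact hmax i h'
      · refine ⟨a, Multiset.mem_cons_self a s, ?_⟩
        intro i hi
        rcases Multiset.mem_cons.mp hi with rfl | h'
        · exact le_rfl
        · exact le_trans (hmax i h') hle

lemma zeck_unique : ∀ (n : ℕ) (s t : Multiset ℕ),
    s.Nodup → (∀ i ∈ s, i + 1 ∉ s) → (∀ i ∈ s, 1 ≤ i) → (s.map ZFib).sum = n →
    t.Nodup → (∀ i ∈ t, i + 1 ∉ t) → (∀ i ∈ t, 1 ≤ i) → (t.map ZFib).sum = n →
    s = t := by
  intro n
  induction n using Nat.strong_induction_on with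
  | _ n IH =>
    intro s t hs1 hs2 hs3 hs4 ht1 ht2 ht3 ht4
    rcases Multiset.empty_or_exists_mem s with h0 | ⟨a, ha⟩
    · subst h0
      simp only [Multiset.map_zero, Multiset.sum_zero] at hs4
      rcases Multiset.empty_or_exists_mem t with h0' | ⟨b, hb⟩
      · exact h0'.symm
      · exfalso
        have h1 := zfib_le_sum hb
        have h2 := ZFib_pos b
        omega
    · rcases Multiset.empty_or_exists_mem t with h0' | ⟨b, hb⟩
      · exfalso
        subst h0'
        simp only [Multiset.map_zero, Multiset.sum_zero] at ht4
        have h1 := zfib_le_sum ha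
        have h2 := ZFib_pos a
        omega
      · obtain ⟨A, hA, hAmax⟩ := multiset_max s (by rintro rfl; simp at ha)
        obtain ⟨B, hB, hBmax⟩ := multiset_max t (by rintro rfl; simp at hb)
        have hsltA : (s.map ZFib).sum < ZFib (A + 1) := zsum_lt A s hs1 hs2 hs3 hAmax
        have htltB : (t.map ZFib).sum < ZFib (B + 1) := zsum_lt B t ht1 ht2 ht3 hBmax
        have hAB : A = B := by
          by_contra hne
          rcases Nat.lt_or_ge A B with hlt | hge
          · have h1 : ZFib B ≤ n := ht4 ▸ zfib_le_sum hB
            have h2 : ZFib B ≥ ZFib (A + 1) := ZFib_mono (by omega)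
            omega
          · have hlt : B < A := by omega
            have h1 : ZFib A ≤ n := hs4 ▸ zfib_le_sum hA
            have h2 : ZFib A ≥ ZFib (B + 1) := ZFib_mono (by omega)
            omega
        subst hAB
        have hApos := ZFib_pos A
        have hAle : ZFib A ≤ n := hs4 ▸ zfib_le_sum hA
        have hs' : s = A ::ₘ s.erase A := (Multiset.cons_erase hA).symm
        have ht' : t = A ::ₘ t.erase A := (Multiset.cons_erase hB).symm
        have hsum_s : ((s.erase A).map ZFib).sum = n - ZFib A := by
          have : (s.map ZFib).sum = ZFib A + ((s.erase A).map ZFib).sum := by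
            conv_lhs => rw [hs']
            simp [Multiset.map_cons, Multiset.sum_cons]
          omega
        have hsum_t : ((t.erase A).map ZFib).sum = n - ZFib A := by
          have : (t.map ZFib).sum = ZFib A + ((t.erase A).map ZFib).sum := by
            conv_lhs => rw [ht']
            simp [Multiset.map_cons, Multiset.sum_cons]
          omega
        have heq : s.erase A = t.erase A := by
          refine IH (n - ZFib A) (by omega) _ _ (hs1.erase A)
            (fun i hi h => hs2 i (Multiset.mem_of_mem_erase hi) (Multiset.mem_of_mem_erase h))
            (fun i hi => hs3 i (Multiset.mem_of_mem_erase hi)) hsum_s (ht1.erase A)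
            (fun i hi h => ht2 i (Multiset.mem_of_mem_erase hi) (Multiset.mem_of_mem_erase h))
            (fun i hi => ht3 i (Multiset.mem_of_mem_erase hi)) hsum_t
        rw [hs', ht', heq]

/-- Any maximal sequence of legal moves from `n` copies of `F_1` ends at the
unique Zeckendorf decomposition of `n`. -/
theorem game_ends_at_zeckendorf (n : ℕ) (s : Multiset ℕ)
    (hreach : Relation.ReflTransGen ZMove (Multiset.replicate n 1) s)
    (hterm : ¬ ∃ t, ZMove s t) :
    s.Nodup ∧ (∀ i ∈ s, i + 1 ∉ s) ∧ (∀ i ∈ s, 1 ≤ i) ∧ (s.map ZFib).sum = n ∧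
      ∀ s' : Multiset ℕ, Relation.ReflTransGen ZMove (Multiset.replicate n 1) s' →
        (¬ ∃ t, ZMove s' t) → s' = s := by
  have key : ∀ u : Multiset ℕ, Relation.ReflTransGen ZMove (Multiset.replicate n 1) u →
      (∀ i ∈ u, 1 ≤ i) ∧ (u.map ZFib).sum = n := by
    intro u h
    induction h with
    | refl =>
      constructor
      · intro i hi
        rw [Multiset.eq_of_mem_replicate hi]
      · rw [Multiset.map_replicate, Multiset.sum_replicate]
        simp [ZFib]
    | tail h1 hmove ih =>
      exact ⟨zmove_pos hmove ih.1, (zmove_sum hmove).trans ih.2⟩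
  obtain ⟨hpos, hsum⟩ := key s hreach
  obtain ⟨hnd, hadj⟩ := terminal_struct hpos hterm
  refine ⟨hnd, hadj, hpos, hsum, ?_⟩
  intro s' hr' ht'
  obtain ⟨hpos', hsum'⟩ := key s' hr'
  obtain ⟨hnd', hadj'⟩ := terminal_struct hpos' ht'
  exact zeck_unique n s' s hnd' hadj' hpos' hsum' hnd hadj hpos hsum
end

section
/- For every positive integer n there exists a sequence of exactly n − Z(n) legal moves in the Zeckendorf game taking the initial state of n copies of F_1 to the Zeckendorf decomposition of n, where Z(n) is the number of terms in that decomposition. -/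
/-- Reachability in exactly `L` moves. -/
def ZReaches (A B : Multiset ℕ) (L : ℕ) : Prop :=
  ∃ f : ℕ → Multiset ℕ, f 0 = A ∧ (∀ m < L, ZMove (f m) (f (m + 1))) ∧ f L = B

lemma ZReaches.refl (A : Multiset ℕ) : ZReaches A A 0 :=
  ⟨fun _ => A, rfl, fun m hm => absurd hm (Nat.not_lt_zero m), rfl⟩

lemma ZReaches.head {A B C : Multiset ℕ} {L : ℕ} (h : ZMove A B) (hr : ZReaches B C L) :
    ZReaches A C (L + 1) := by
  obtain ⟨f, h0, hm, hL⟩ := hr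
  refine ⟨fun m => match m with | 0 => A | k + 1 => f k, rfl, ?_, hL⟩
  intro m hmlt
  match m with
  | 0 => simpa [h0] using h
  | k + 1 => exact hm k (by omega)

lemma ZReaches.trans {A B C : Multiset ℕ} {L1 L2 : ℕ}
    (h1 : ZReaches A B L1) (h2 : ZReaches B C L2) : ZReaches A C (L1 + L2) := by
  obtain ⟨f, hf0, hfm, hfL⟩ := h1
  obtain ⟨g, hg0, hgm, hgL⟩ := h2
  refine ⟨fun m => if m < L1 then f m else g (m - L1), ?_, ?_, ?_⟩
  · by_cases h : 0 < L1
    · simp [h, hf0]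
    · have : L1 = 0 := by omega
      simp [this, hg0, ← hf0, this ▸ hfL]
  · intro m hm
    by_cases h : m + 1 < L1
    · have : m < L1 := by omega
      simpa [h, this] using hfm m this
    · by_cases h' : m < L1
      · have : m + 1 = L1 := by omega
        have e : g (m + 1 - L1) = f (m + 1) := by
          rw [this]; simp [hg0, ← hfL, this]
        show ZMove (if m < L1 then f m else g (m - L1)) (if m + 1 < L1 then f (m + 1) else g (m + 1 - L1))
        rw [if_pos h', if_neg h, e]; exact hfm m h'
      · have hL : L1 ≤ m := by omega
        have e1 : m + 1 - L1 = (m - L1) + 1 := by omega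
        simpa [h, h', e1] using hgm (m - L1) (by omega)
  · by_cases h : L1 + L2 < L1
    · omega
    · simp [h, hgL]

/-- Moves are stable under adding an extra untouched chip. -/
lemma ZMove.cons {A B : Multiset ℕ} (a : ℕ) (h : ZMove A B) :
    ZMove (a ::ₘ A) (a ::ₘ B) := by
  cases h with
  | combine s i hi =>
      have e1 : a ::ₘ (i - 1) ::ₘ i ::ₘ s = (i - 1) ::ₘ i ::ₘ (a ::ₘ s) := by
        rw [Multiset.cons_swap a, Multiset.cons_swap a]
      have e2 : a ::ₘ (i + 1) ::ₘ s = (i + 1) ::ₘ (a ::ₘ s) := Multiset.cons_swap a _ _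
      rw [e1, e2]; exact ZMove.combine (a ::ₘ s) i hi
  | addOnes s =>
      have e1 : a ::ₘ (1 : ℕ) ::ₘ 1 ::ₘ s = 1 ::ₘ 1 ::ₘ (a ::ₘ s) := by
        rw [Multiset.cons_swap a, Multiset.cons_swap a]
      have e2 : a ::ₘ (2 : ℕ) ::ₘ s = 2 ::ₘ (a ::ₘ s) := Multiset.cons_swap a _ _
      rw [e1, e2]; exact ZMove.addOnes (a ::ₘ s)
  | splitTwos s =>
      have e1 : a ::ₘ (2 : ℕ) ::ₘ 2 ::ₘ s = 2 ::ₘ 2 ::ₘ (a ::ₘ s) := by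
        rw [Multiset.cons_swap a, Multiset.cons_swap a]
      have e2 : a ::ₘ (1 : ℕ) ::ₘ 3 ::ₘ s = 1 ::ₘ 3 ::ₘ (a ::ₘ s) := by
        rw [Multiset.cons_swap a, Multiset.cons_swap a]
      rw [e1, e2]; exact ZMove.splitTwos (a ::ₘ s)
  | split s i hi =>
      have e1 : a ::ₘ i ::ₘ i ::ₘ s = i ::ₘ i ::ₘ (a ::ₘ s) := by
        rw [Multiset.cons_swap a, Multiset.cons_swap a]
      have e2 : a ::ₘ (i - 2) ::ₘ (i + 1) ::ₘ s = (i - 2) ::ₘ (i + 1) ::ₘ (a ::ₘ s) := by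
        rw [Multiset.cons_swap a, Multiset.cons_swap a]
      rw [e1, e2]; exact ZMove.split (a ::ₘ s) i hi

lemma ZReaches.cons {A B : Multiset ℕ} {L : ℕ} (a : ℕ) (h : ZReaches A B L) :
    ZReaches (a ::ₘ A) (a ::ₘ B) L := by
  obtain ⟨f, h0, hm, hL⟩ := h
  exact ⟨fun m => a ::ₘ f m, by simp [h0], fun m hmlt => (hm m hmlt).cons a, by simp [hL]⟩

lemma ZFib_add_s10 (j : ℕ) : ZFib j + ZFib (j + 1) = ZFib (j + 2) := by
  show Nat.fib (j + 1) + Nat.fib (j + 1 + 1) = Nat.fib (j + 1 + 2)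
  have h := Nat.fib_add_two (n := j + 1)
  omega

/-- Carry cascade: push a chip `j` into a Zeckendorf-like pile with no `j` and no `j-1`. -/
lemma cascade (T : Multiset ℕ) : ∀ (j : ℕ), 1 ≤ j → T.Nodup →
    (∀ i ∈ T, i + 1 ∉ T) → (∀ i ∈ T, 1 ≤ i) → j ∉ T → j - 1 ∉ T →
    ∃ (L : ℕ) (Z : Multiset ℕ), ZReaches (j ::ₘ T) Z L ∧ Z.Nodup ∧
      (∀ i ∈ Z, i + 1 ∉ Z) ∧ (∀ i ∈ Z, 1 ≤ i) ∧
      (Z.map ZFib).sum = ((j ::ₘ T).map ZFib).sum ∧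
      L + Multiset.card Z = Multiset.card T + 1 := by
  induction T using Multiset.strongInductionOn with
  | ih T IH =>
    intro j hj hnd hgap hge hjT hj1T
    by_cases hmem : j + 1 ∈ T
    · -- combine j and j+1 into j+2, recurse
      set T' := T.erase (j + 1) with hT'
      have hTe : T = (j + 1) ::ₘ T' := (Multiset.cons_erase hmem).symm
      have hlt : T' < T := Multiset.erase_lt.mpr hmem
      have hnd' : T'.Nodup := hnd.erase _
      have hsub : T' ≤ T := Multiset.erase_le _ _
      have hgap' : ∀ i ∈ T', i + 1 ∉ T' := fun i hi hc =>
        hgap i (Multiset.mem_of_le hsub hi) (Multiset.mem_of_le hsub hc)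
      have hge' : ∀ i ∈ T', 1 ≤ i := fun i hi => hge i (Multiset.mem_of_le hsub hi)
      have h2 : j + 2 ∉ T' := fun hc =>
        hgap (j + 1) hmem (Multiset.mem_of_le hsub hc)
      have h1 : j + 2 - 1 ∉ T' := by
        have := hnd.notMem_erase (a := j + 1) -- j+1 ∉ T.erase (j+1)
        simpa using this
      obtain ⟨L, Z, hr, hZnd, hZgap, hZge, hZsum, hZcard⟩ :=
        IH T' hlt (j + 2) (by omega) hnd' hgap' hge' h2 h1
      have hmove : ZMove (j ::ₘ T) ((j + 2) ::ₘ T') := by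
        rw [hTe]
        have := ZMove.combine T' (j + 1) (by omega)
        simpa using this
      refine ⟨L + 1, Z, ZReaches.head hmove hr, hZnd, hZgap, hZge, ?_, ?_⟩
      · rw [hZsum, hTe]
        simp only [Multiset.map_cons, Multiset.sum_cons]
        rw [← ZFib_add_s10 j]
        ring
      · have : Multiset.card T = Multiset.card T' + 1 := by rw [hTe]; simp
        omega
    · -- done: j ::ₘ T is already Zeckendorf
      refine ⟨0, j ::ₘ T, ZReaches.refl _, ?_, ?_, ?_, rfl, by simp⟩
      · exact Multiset.nodup_cons.2 ⟨hjT, hnd⟩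
      · intro i hi
        rcases Multiset.mem_cons.1 hi with rfl | hi
        · simp only [Multiset.mem_cons]
          push_neg
          exact ⟨by omega, hmem⟩
        · simp only [Multiset.mem_cons]
          push_neg
          constructor
          · rintro rfl
            exact hj1T (by simpa using hi)
          · exact hgap i hi
      · intro i hi
        rcases Multiset.mem_cons.1 hi with rfl | hi
        · exact hj
        · exact hge i hi

/-- Adding one chip `1` to a Zeckendorf pile and renormalizing. -/
lemma insert_one (S : Multiset ℕ) (hnd : S.Nodup) (hgap : ∀ i ∈ S, i + 1 ∉ S)
    (hge : ∀ i ∈ S, 1 ≤ i) :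
    ∃ (L : ℕ) (Z : Multiset ℕ), ZReaches (1 ::ₘ S) Z L ∧ Z.Nodup ∧
      (∀ i ∈ Z, i + 1 ∉ Z) ∧ (∀ i ∈ Z, 1 ≤ i) ∧
      (Z.map ZFib).sum = ((1 ::ₘ S).map ZFib).sum ∧
      L + Multiset.card Z = Multiset.card S + 1 := by
  by_cases h1 : 1 ∈ S
  · set S' := S.erase 1 with hS'
    have hSe : S = 1 ::ₘ S' := (Multiset.cons_erase h1).symm
    have hnd' : S'.Nodup := hnd.erase _
    have hsub : S' ≤ S := Multiset.erase_le _ _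
    have hgap' : ∀ i ∈ S', i + 1 ∉ S' := fun i hi hc =>
      hgap i (Multiset.mem_of_le hsub hi) (Multiset.mem_of_le hsub hc)
    have hge' : ∀ i ∈ S', 1 ≤ i := fun i hi => hge i (Multiset.mem_of_le hsub hi)
    have h2 : (2 : ℕ) ∉ S' := fun hc => hgap 1 h1 (Multiset.mem_of_le hsub hc)
    have h1' : (2 : ℕ) - 1 ∉ S' := by
      have := hnd.notMem_erase (a := 1)
      simpa using this
    obtain ⟨L, Z, hr, hZnd, hZgap, hZge, hZsum, hZcard⟩ :=
      cascade S' 2 (by omega) hnd' hgap' hge' h2 h1'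
    have hmove : ZMove (1 ::ₘ S) (2 ::ₘ S') := by
      rw [hSe]; exact ZMove.addOnes S'
    refine ⟨L + 1, Z, ZReaches.head hmove hr, hZnd, hZgap, hZge, ?_, ?_⟩
    · rw [hZsum, hSe]
      have h3 : Nat.fib 3 = 2 := by decide
      simp [ZFib, h3]
      omega
    · have : Multiset.card S = Multiset.card S' + 1 := by rw [hSe]; simp
      omega
  · obtain ⟨L, Z, hr, hZnd, hZgap, hZge, hZsum, hZcard⟩ :=
      cascade S 1 le_rfl hnd hgap hge h1 (by
        intro hc
        exact absurd (hge 0 (by simpa using hc)) (by omega))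
    exact ⟨L, Z, hr, hZnd, hZgap, hZge, hZsum, hZcard⟩

/-- For every positive `n` there is a play of exactly `n - Z(n)` legal moves
from `n` copies of `F_1` to the Zeckendorf decomposition of `n`. -/
theorem exists_shortest_game (n : ℕ) (hn : 0 < n) :
    ∃ (L : ℕ) (f : ℕ → Multiset ℕ),
      f 0 = Multiset.replicate n 1 ∧
      (∀ m < L, ZMove (f m) (f (m + 1))) ∧
      (f L).Nodup ∧ (∀ i ∈ f L, i + 1 ∉ f L) ∧ (∀ i ∈ f L, 1 ≤ i) ∧
      ((f L).map ZFib).sum = n ∧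
      L + Multiset.card (f L) = n := by
  -- first prove a Reaches-based version by induction
  suffices h : ∃ (L : ℕ) (Z : Multiset ℕ), ZReaches (Multiset.replicate n 1) Z L ∧
      Z.Nodup ∧ (∀ i ∈ Z, i + 1 ∉ Z) ∧ (∀ i ∈ Z, 1 ≤ i) ∧
      (Z.map ZFib).sum = n ∧ L + Multiset.card Z = n by
    obtain ⟨L, Z, ⟨f, hf0, hfm, hfL⟩, hZnd, hZgap, hZge, hZsum, hZcard⟩ := h
    exact ⟨L, f, hf0, hfm, hfL ▸ hZnd, hfL ▸ hZgap, hfL ▸ hZge, hfL ▸ hZsum,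
      hfL ▸ hZcard⟩
  induction n with
  | zero => omega
  | succ n IH =>
    by_cases hn0 : n = 0
    · subst hn0
      refine ⟨0, {1}, ?_, ?_, ?_, ?_, ?_, ?_⟩
      · simpa [Multiset.replicate_one] using ZReaches.refl ({1} : Multiset ℕ)
      · simp
      · intro i hi; simp_all
      · intro i hi; simp_all
      · simp [ZFib]
      · simp
    · obtain ⟨L, Z, hr, hZnd, hZgap, hZge, hZsum, hZcard⟩ := IH (by omega)
      obtain ⟨L2, Z2, hr2, h2nd, h2gap, h2ge, h2sum, h2card⟩ :=
        insert_one Z hZnd hZgap hZge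
      refine ⟨L + L2, Z2, ?_, h2nd, h2gap, h2ge, ?_, ?_⟩
      · have step1 : ZReaches (Multiset.replicate (n + 1) 1) (1 ::ₘ Z) L := by
          have := hr.cons 1
          simpa [Multiset.replicate_succ] using this
        exact step1.trans hr2
      · rw [h2sum]
        simp only [Multiset.map_cons, Multiset.sum_cons]
        rw [hZsum]
        simp [ZFib]
        omega
      · omega
end

section
/- For every integer n > 3, there exist two sequences of legal moves in the Zeckendorf game from n copies of F_1 to the Zeckendorf decomposition of n whose lengths have opposite parities (one even, one odd). -/
/-- A complete game of the Zeckendorf game on `n`: a play of `L` legal moves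
from `n` copies of `F_1` ending at a state with no legal move. -/
def ZGame (n L : ℕ) (f : ℕ → Multiset ℕ) : Prop :=
  f 0 = Multiset.replicate n 1 ∧ (∀ m < L, ZMove (f m) (f (m + 1))) ∧
    ¬ ∃ t, ZMove (f L) t

def ZM (s : Multiset ℕ) : ℕ := (Multiset.card s + s.sum) ^ 2 + s.count 2

lemma ZM_lt_of_B_lt {s t : Multiset ℕ}
    (h : Multiset.card t + t.sum < Multiset.card s + s.sum) : ZM t < ZM s := by
  have hc : t.count 2 ≤ Multiset.card t := Multiset.count_le_card _ _
  have h2 : Multiset.card t + t.sum + 1 ≤ Multiset.card s + s.sum := h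
  have h3 := Nat.pow_le_pow_left h2 2
  unfold ZM
  nlinarith [h3, hc, Nat.le_add_right (Multiset.card t) t.sum]

lemma ZM_decreases {s t : Multiset ℕ} (h : ZMove s t) : ZM t < ZM s := by
  cases h with
  | combine s i hi =>
      apply ZM_lt_of_B_lt
      simp only [Multiset.card_cons, Multiset.sum_cons]
      omega
  | addOnes s =>
      apply ZM_lt_of_B_lt
      simp only [Multiset.card_cons, Multiset.sum_cons]
      omega
  | splitTwos s =>
      unfold ZM
      simp only [Multiset.card_cons, Multiset.sum_cons, Multiset.count_cons]
      norm_num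
      have he : Multiset.card s + 1 + 1 + (1 + (3 + s.sum))
          = Multiset.card s + 1 + 1 + (2 + (2 + s.sum)) := by ring
      rw [he]
      linarith
  | split s i hi =>
      apply ZM_lt_of_B_lt
      simp only [Multiset.card_cons, Multiset.sum_cons]
      omega

lemma exists_terminal (s : Multiset ℕ) :
    ∃ (L : ℕ) (f : ℕ → Multiset ℕ), f 0 = s ∧ (∀ m < L, ZMove (f m) (f (m + 1))) ∧ ¬ ∃ t, ZMove (f L) t := by
  have key : ∀ k (s : Multiset ℕ), ZM s = k →
      ∃ (L : ℕ) (f : ℕ → Multiset ℕ), f 0 = s ∧ (∀ m < L, ZMove (f m) (f (m + 1))) ∧ ¬ ∃ t, ZMove (f L) t := by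
    intro k
    induction k using Nat.strong_induction_on with
    | _ k ih =>
      intro s hk
      by_cases h : ∃ t, ZMove s t
      · obtain ⟨t, ht⟩ := h
        obtain ⟨L, f, hf0, hm, hterm⟩ := ih (ZM t) (hk ▸ ZM_decreases ht) t rfl
        refine ⟨L + 1, fun m => if m = 0 then s else f (m - 1), by simp, ?_, ?_⟩
        · intro m hm2
          match m with
          | 0 => simpa [hf0] using ht
          | Nat.succ j =>
              simpa using hm j (by omega)
        · simpa using hterm
      · exact ⟨0, fun _ => s, rfl, by omega, by simpa using h⟩
  exact key (ZM s) s rfl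

lemma zprepend {s t : Multiset ℕ} (h : ZMove s t) {L : ℕ} {f : ℕ → Multiset ℕ}
    (hf : f 0 = t) (hm : ∀ m < L, ZMove (f m) (f (m + 1)))
    (ht : ¬ ∃ u, ZMove (f L) u) :
    ∃ g : ℕ → Multiset ℕ, g 0 = s ∧ (∀ m < L + 1, ZMove (g m) (g (m + 1))) ∧
      ¬ ∃ u, ZMove (g (L + 1)) u := by
  refine ⟨fun m => if m = 0 then s else f (m - 1), by simp, ?_, by simpa using ht⟩
  intro m hm2
  match m with
  | 0 => simpa [hf] using h
  | Nat.succ j => simpa using hm j (by omega)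

/-- For every `n > 3` there are two complete games whose lengths have
opposite parities. -/
theorem exists_games_opposite_parity (n : ℕ) (hn : 3 < n) :
    ∃ (L₁ L₂ : ℕ) (f g : ℕ → Multiset ℕ),
      ZGame n L₁ f ∧ ZGame n L₂ g ∧ Even L₁ ∧ Odd L₂ := by
  obtain ⟨k, rfl⟩ : ∃ k, n = k + 4 := ⟨n - 4, by omega⟩
  set r := Multiset.replicate k 1 with hr
  have hrep : Multiset.replicate (k + 4) 1 = 1 ::ₘ 1 ::ₘ 1 ::ₘ 1 ::ₘ r := by
    rw [show k + 4 = (k + 3) + 1 from rfl, Multiset.replicate_succ,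
      show k + 3 = (k + 2) + 1 from rfl, Multiset.replicate_succ,
      show k + 2 = (k + 1) + 1 from rfl, Multiset.replicate_succ,
      Multiset.replicate_succ]
  have m1 : ZMove (1 ::ₘ 1 ::ₘ 1 ::ₘ 1 ::ₘ r) (2 ::ₘ 1 ::ₘ 1 ::ₘ r) :=
    ZMove.addOnes _
  have mA2 : ZMove (2 ::ₘ 1 ::ₘ 1 ::ₘ r) (1 ::ₘ 3 ::ₘ r) := by
    have h := ZMove.combine (1 ::ₘ r) 2 le_rfl
    norm_num at h
    rwa [Multiset.cons_swap 1 2, Multiset.cons_swap 3 1] at h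
  have mB2 : ZMove (2 ::ₘ 1 ::ₘ 1 ::ₘ r) (2 ::ₘ 2 ::ₘ r) := by
    have h := ZMove.addOnes (2 ::ₘ r)
    rwa [Multiset.cons_swap 1 2, Multiset.cons_swap 1 2] at h
  have mB3 : ZMove (2 ::ₘ 2 ::ₘ r) (1 ::ₘ 3 ::ₘ r) := ZMove.splitTwos r
  obtain ⟨L, f, hf0, hm, hterm⟩ := exists_terminal (1 ::ₘ 3 ::ₘ r)
  -- game A: length L + 2
  obtain ⟨g1, hg10, hg1m, hg1t⟩ := zprepend mA2 hf0 hm hterm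
  obtain ⟨gA, hgA0, hgAm, hgAt⟩ := zprepend m1 hg10 hg1m hg1t
  have gameA : ZGame (k + 4) (L + 2) gA :=
    ⟨by rw [hgA0, hrep], hgAm, hgAt⟩
  -- game B: length L + 3
  obtain ⟨h1, hh10, hh1m, hh1t⟩ := zprepend mB3 hf0 hm hterm
  obtain ⟨h2, hh20, hh2m, hh2t⟩ := zprepend mB2 hh10 hh1m hh1t
  obtain ⟨gB, hgB0, hgBm, hgBt⟩ := zprepend m1 hh20 hh2m hh2t
  have gameB : ZGame (k + 4) (L + 3) gB :=
    ⟨by rw [hgB0, hrep], hgBm, hgBt⟩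
  rcases Nat.even_or_odd L with ⟨c, hc⟩ | ⟨c, hc⟩
  · exact ⟨L + 2, L + 3, gA, gB, gameA, gameB, ⟨c + 1, by omega⟩, ⟨c + 1, by omega⟩⟩
  · exact ⟨L + 3, L + 2, gB, gA, gameB, gameA, ⟨c + 2, by omega⟩, ⟨c + 1, by omega⟩⟩
end

section
/- For the greedy deterministic Zeckendorf game (always moving on the largest available summand), the number of moves m(n) satisfies m(n+1) + Z(n+1) = m(n) + Z(n) + 1 for all n ≥ 1, where Z(n) is the number of terms in the Zeckendorf decomposition of n; consequently m(n) = n − Z(n). -/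
/-- `ZMoveAt i s t`: a legal move from `s` to `t` whose largest consumed
index is `i` (the summand acted on). -/
inductive ZMoveAt : ℕ → Multiset ℕ → Multiset ℕ → Prop
  | combine (s : Multiset ℕ) (i : ℕ) (h : 2 ≤ i) :
      ZMoveAt i ((i - 1) ::ₘ i ::ₘ s) ((i + 1) ::ₘ s)
  | addOnes (s : Multiset ℕ) :
      ZMoveAt 1 (1 ::ₘ 1 ::ₘ s) (2 ::ₘ s)
  | splitTwos (s : Multiset ℕ) :
      ZMoveAt 2 (2 ::ₘ 2 ::ₘ s) (1 ::ₘ 3 ::ₘ s)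
  | split (s : Multiset ℕ) (i : ℕ) (h : 3 ≤ i) :
      ZMoveAt i (i ::ₘ i ::ₘ s) ((i - 2) ::ₘ (i + 1) ::ₘ s)

/-- A greedy move: a legal move acting on the largest-valued summand that
admits a move. -/
def GreedyMove (s t : Multiset ℕ) : Prop :=
  ∃ i, ZMoveAt i s t ∧ ∀ (j : ℕ) (t' : Multiset ℕ), ZMoveAt j s t' → j ≤ i

/-- Invariant: all entries positive, and every index `≥ 2` occurs at most once. -/
def ZInv (s : Multiset ℕ) : Prop :=
  (∀ i ∈ s, 1 ≤ i) ∧ ∀ j, 2 ≤ j → s.count j ≤ 1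

lemma cons2 {s : Multiset ℕ} {a b : ℕ} (ha : a ∈ s) (hb : b ∈ s.erase a) :
    ∃ u, s = a ::ₘ b ::ₘ u :=
  ⟨(s.erase a).erase b, by rw [Multiset.cons_erase hb, Multiset.cons_erase ha]⟩

lemma zfib_add {i : ℕ} (h : 2 ≤ i) : ZFib (i - 1) + ZFib i = ZFib (i + 1) := by
  obtain ⟨k, rfl⟩ : ∃ k, i = k + 2 := ⟨i - 2, by omega⟩
  simp [ZFib, Nat.fib_add_two]


lemma greedy_step {s t : Multiset ℕ} (hP : ZInv s) (hg : GreedyMove s t) :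
    ZInv t ∧ Multiset.card t + 1 = Multiset.card s ∧
      (t.map ZFib).sum = (s.map ZFib).sum := by
  obtain ⟨i, hmove, hmax⟩ := hg
  cases hmove with
  | combine s' i h2 =>
      have hnotin : i + 1 ∉ s' := by
        intro hin
        obtain ⟨u, hu⟩ := Multiset.exists_cons_of_mem hin
        have heq : (i - 1) ::ₘ i ::ₘ s' = ((i+1) - 1) ::ₘ (i+1) ::ₘ ((i - 1) ::ₘ u) := by
          rw [hu]
          have h1 : (i + 1) - 1 = i := by omega
          rw [h1]
          ext j
          simp [Multiset.count_cons]
          omega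
        have := hmax (i+1) ((i+1+1) ::ₘ ((i-1) ::ₘ u))
          (heq ▸ ZMoveAt.combine ((i-1) ::ₘ u) (i+1) (by omega))
        omega
      refine ⟨⟨?_, ?_⟩, by simp, ?_⟩
      · intro a ha
        rcases Multiset.mem_cons.1 ha with rfl | ha
        · omega
        · exact hP.1 a (by simp [ha])
      · intro j hj
        have hc := hP.2 j hj
        have hcnt : s'.count (i+1) = 0 := Multiset.count_eq_zero.2 hnotin
        by_cases hji : j = i + 1
        · subst hji; simp [Multiset.count_cons, hcnt]
        · have : ((i+1) ::ₘ s').count j = s'.count j := by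
            simp [Multiset.count_cons, hji]
          rw [this]
          simp [Multiset.count_cons] at hc
          omega
      · simp only [Multiset.map_cons, Multiset.sum_cons]
        rw [← zfib_add h2]
        ring
  | addOnes s' =>
      have hnotin : (2:ℕ) ∉ s' := by
        intro hin
        obtain ⟨u, hu⟩ := Multiset.exists_cons_of_mem hin
        have heq : (1:ℕ) ::ₘ 1 ::ₘ s' = (2 - 1) ::ₘ 2 ::ₘ ((1:ℕ) ::ₘ u) := by
          rw [hu]
          ext j
          simp [Multiset.count_cons]
          omega
        have := hmax 2 ((2+1) ::ₘ ((1:ℕ) ::ₘ u))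
          (heq ▸ ZMoveAt.combine ((1:ℕ) ::ₘ u) 2 (by omega))
        omega
      refine ⟨⟨?_, ?_⟩, by simp, ?_⟩
      · intro a ha
        rcases Multiset.mem_cons.1 ha with rfl | ha
        · omega
        · exact hP.1 a (by simp [ha])
      · intro j hj
        have hc := hP.2 j hj
        have hcnt : s'.count 2 = 0 := Multiset.count_eq_zero.2 hnotin
        by_cases hji : j = 2
        · subst hji; simp [Multiset.count_cons, hcnt]
        · have : ((2:ℕ) ::ₘ s').count j = s'.count j := by
            simp [Multiset.count_cons, hji]
          rw [this]
          simp [Multiset.count_cons] at hc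
          omega
      · simp only [Multiset.map_cons, Multiset.sum_cons]
        have : ZFib 2 = ZFib 1 + ZFib 1 := by decide
        rw [this]; ring
  | splitTwos s' =>
      exfalso
      have := hP.2 2 le_rfl
      simp [Multiset.count_cons] at this
  | split s' i h3 =>
      exfalso
      have := hP.2 i (by omega)
      simp [Multiset.count_cons] at this

lemma terminal_zeck {s : Multiset ℕ} (hP : ZInv s) (hterm : ¬ ∃ t, ZMove s t) :
    s.Nodup ∧ (∀ i ∈ s, i + 1 ∉ s) ∧ (∀ i ∈ s, 1 ≤ i) := by
  have adj : ∀ i ∈ s, i + 1 ∉ s := by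
    intro i hi hin
    have hi1 : 1 ≤ i := hP.1 i hi
    have hb : i + 1 ∈ s.erase i := Multiset.mem_erase_of_ne (by omega) |>.2 hin
    obtain ⟨u, hu⟩ := cons2 hi hb
    apply hterm
    refine ⟨(i+1+1) ::ₘ u, ?_⟩
    have h1 : (i+1) - 1 = i := by omega
    have heq : s = ((i+1) - 1) ::ₘ (i+1) ::ₘ u := by rw [hu, h1]
    exact heq ▸ ZMove.combine u (i+1) (by omega)
  refine ⟨?_, adj, hP.1⟩
  rw [Multiset.nodup_iff_count_le_one]
  intro j
  by_contra hc
  push_neg at hc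
  have hj : j ∈ s := Multiset.count_pos.1 (by omega)
  have hj1 : 1 ≤ j := hP.1 j hj
  have hj2 : j < 2 := by
    by_contra h
    have := hP.2 j (by omega)
    omega
  have hjeq : j = 1 := by omega
  subst hjeq
  have hb : (1:ℕ) ∈ s.erase 1 := by
    rw [← Multiset.count_pos, Multiset.count_erase_self]
    omega
  obtain ⟨u, hu⟩ := cons2 hj hb
  refine hterm ⟨2 ::ₘ u, ?_⟩
  rw [hu]
  exact ZMove.addOnes u

lemma greedy_chain {n M : ℕ} {f : ℕ → Multiset ℕ}
    (hf0 : f 0 = Multiset.replicate n 1)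
    (hstep : ∀ k < M, GreedyMove (f k) (f (k + 1))) :
    ∀ k ≤ M, ZInv (f k) ∧ Multiset.card (f k) + k = n ∧
      ((f k).map ZFib).sum = n := by
  intro k
  induction k with
  | zero =>
      intro _
      rw [hf0]
      refine ⟨⟨?_, ?_⟩, by simp, ?_⟩
      · intro i hi
        rw [Multiset.eq_of_mem_replicate hi]
      · intro j hj
        rw [Multiset.count_replicate]
        split <;> omega
      · have : ZFib 1 = 1 := by decide
        simp [Multiset.map_replicate, this, Multiset.sum_replicate]
  | succ k ih =>
      intro hk
      obtain ⟨hP, hcard, hsum⟩ := ih (by omega)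
      obtain ⟨hP', hcard', hsum'⟩ := greedy_step hP (hstep k (by omega))
      exact ⟨hP', by omega, by omega⟩

/-- For the greedy deterministic Zeckendorf game, if `m n` is the number of
moves of the greedy game on `n` and `Z n` the number of terms of the
Zeckendorf decomposition of `n`, then
`m(n+1) + Z(n+1) = m(n) + Z(n) + 1` for all `n ≥ 1`, and consequently
`m(n) = n - Z(n)`. -/
theorem greedy_game_length (m Z : ℕ → ℕ)
    (hZ : ∀ (n : ℕ) (s : Multiset ℕ), s.Nodup → (∀ i ∈ s, i + 1 ∉ s) →
      (∀ i ∈ s, 1 ≤ i) → (s.map ZFib).sum = n → Z n = Multiset.card s)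
    (hm : ∀ n : ℕ, 1 ≤ n → ∃ f : ℕ → Multiset ℕ,
      f 0 = Multiset.replicate n 1 ∧
      (∀ k < m n, GreedyMove (f k) (f (k + 1))) ∧
      ¬ ∃ t, ZMove (f (m n)) t) :
    ∀ n : ℕ, 1 ≤ n →
      m (n + 1) + Z (n + 1) = m n + Z n + 1 ∧ m n = n - Z n := by
  have key : ∀ n : ℕ, 1 ≤ n → m n + Z n = n := by
    intro n hn
    obtain ⟨f, hf0, hstep, hterm⟩ := hm n hn
    obtain ⟨hP, hcard, hsum⟩ := greedy_chain hf0 hstep (m n) le_rfl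
    obtain ⟨hnd, hadj, hpos⟩ := terminal_zeck hP hterm
    have hZn := hZ n (f (m n)) hnd hadj hpos hsum
    omega
  intro n hn
  have h1 := key n hn
  have h2 := key (n + 1) (by omega)
  omega
end

section
/- The sum of square roots of indices monovariant is strictly decreasing along any play of the Zeckendorf game: if state T is obtained from state S by a legal move, then the sum over the multiset T of √(index) is strictly less than the corresponding sum over S. -/
/-- The sum of square roots of indices is a strictly decreasing monovariant:
each legal move strictly decreases it. -/
theorem monovariant_strict_decrease (s t : Multiset ℕ) (h : ZMove s t) :
    (t.map fun i => Real.sqrt i).sum < (s.map fun i => Real.sqrt i).sum := by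
  induction h with
  | combine s i hi =>
    show (Multiset.map (fun i => Real.sqrt i)
        (Multiset.bind ((i + 1) ::ₘ s) (fun a => {((a : ℕ) : ℝ)}))).sum <
      (Multiset.map (fun i => Real.sqrt i)
        (Multiset.bind ((i - 1) ::ₘ i ::ₘ s) (fun a => {((a : ℕ) : ℝ)}))).sum
    simp only [Multiset.cons_bind, Multiset.singleton_bind, Multiset.map_add, Multiset.sum_add, Multiset.map_cons,
      Multiset.sum_cons, Multiset.map_bind, Multiset.map_singleton, Multiset.sum_bind,
      Multiset.sum_singleton]
    have hc : ((i - 1 : ℕ) : ℝ) = (i : ℝ) - 1 := by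
      push_cast [Nat.cast_sub (by omega : 1 ≤ i)]; ring
    rw [hc]
    have hi' : (2 : ℝ) ≤ (i : ℝ) := by exact_mod_cast hi
    set a := Real.sqrt ((i : ℝ) - 1) with ha
    set b := Real.sqrt (i : ℝ) with hb
    have ha2 : a ^ 2 = (i : ℝ) - 1 := Real.sq_sqrt (by linarith)
    have hb2 : b ^ 2 = (i : ℝ) := Real.sq_sqrt (by linarith)
    have hap : 0 < a := Real.sqrt_pos.2 (by linarith)
    have hbp : 0 < b := Real.sqrt_pos.2 (by linarith)
    have key : Real.sqrt ((i : ℝ) + 1) < a + b := by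
      have h1 : ((i : ℝ) + 1) < (a + b) ^ 2 := by nlinarith [mul_pos hap hbp]
      calc Real.sqrt ((i : ℝ) + 1) < Real.sqrt ((a + b) ^ 2) :=
            Real.sqrt_lt_sqrt (by linarith) h1
        _ = a + b := Real.sqrt_sq (by linarith)
    push_cast
    linarith
  | addOnes s =>
    show (Multiset.map (fun i => Real.sqrt i)
        (Multiset.bind (2 ::ₘ s) (fun a => {((a : ℕ) : ℝ)}))).sum <
      (Multiset.map (fun i => Real.sqrt i)
        (Multiset.bind (1 ::ₘ 1 ::ₘ s) (fun a => {((a : ℕ) : ℝ)}))).sum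
    simp only [Multiset.cons_bind, Multiset.singleton_bind, Multiset.map_add, Multiset.sum_add, Multiset.map_cons,
      Multiset.sum_cons, Multiset.map_bind, Multiset.map_singleton, Multiset.sum_bind,
      Multiset.sum_singleton]
    have h2 : Real.sqrt 2 < 2 := by
      have h1 : Real.sqrt 2 < Real.sqrt 4 := Real.sqrt_lt_sqrt (by norm_num) (by norm_num)
      have h4 : Real.sqrt 4 = 2 := by
        rw [show (4 : ℝ) = 2 ^ 2 by norm_num, Real.sqrt_sq (by norm_num)]
      linarith
    push_cast
    rw [Real.sqrt_one]
    linarith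
  | splitTwos s =>
    show (Multiset.map (fun i => Real.sqrt i)
        (Multiset.bind (1 ::ₘ 3 ::ₘ s) (fun a => {((a : ℕ) : ℝ)}))).sum <
      (Multiset.map (fun i => Real.sqrt i)
        (Multiset.bind (2 ::ₘ 2 ::ₘ s) (fun a => {((a : ℕ) : ℝ)}))).sum
    simp only [Multiset.cons_bind, Multiset.singleton_bind, Multiset.map_add, Multiset.sum_add, Multiset.map_cons,
      Multiset.sum_cons, Multiset.map_bind, Multiset.map_singleton, Multiset.sum_bind,
      Multiset.sum_singleton]
    have h2 : Real.sqrt 2 ^ 2 = 2 := Real.sq_sqrt (by norm_num)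
    have h3 : Real.sqrt 3 ^ 2 = 3 := Real.sq_sqrt (by norm_num)
    have h2p : 0 < Real.sqrt 2 := Real.sqrt_pos.2 (by norm_num)
    have h3p : 0 < Real.sqrt 3 := Real.sqrt_pos.2 (by norm_num)
    have key : 1 + Real.sqrt 3 < 2 * Real.sqrt 2 := by
      nlinarith [sq_nonneg (Real.sqrt 3 - 1)]
    push_cast
    rw [Real.sqrt_one]
    linarith
  | split s i hi =>
    show (Multiset.map (fun i => Real.sqrt i)
        (Multiset.bind ((i - 2) ::ₘ (i + 1) ::ₘ s) (fun a => {((a : ℕ) : ℝ)}))).sum <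
      (Multiset.map (fun i => Real.sqrt i)
        (Multiset.bind (i ::ₘ i ::ₘ s) (fun a => {((a : ℕ) : ℝ)}))).sum
    simp only [Multiset.cons_bind, Multiset.singleton_bind, Multiset.map_add, Multiset.sum_add, Multiset.map_cons,
      Multiset.sum_cons, Multiset.map_bind, Multiset.map_singleton, Multiset.sum_bind,
      Multiset.sum_singleton]
    have hc : ((i - 2 : ℕ) : ℝ) = (i : ℝ) - 2 := by
      push_cast [Nat.cast_sub (by omega : 2 ≤ i)]; ring
    rw [hc]
    have hi' : (3 : ℝ) ≤ (i : ℝ) := by exact_mod_cast hi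
    set a := Real.sqrt ((i : ℝ) - 2) with ha
    set b := Real.sqrt ((i : ℝ) + 1) with hb
    set c := Real.sqrt (i : ℝ) with hcdef
    have ha2 : a ^ 2 = (i : ℝ) - 2 := Real.sq_sqrt (by linarith)
    have hb2 : b ^ 2 = (i : ℝ) + 1 := Real.sq_sqrt (by linarith)
    have hc2 : c ^ 2 = (i : ℝ) := Real.sq_sqrt (by linarith)
    have hap : 0 ≤ a := Real.sqrt_nonneg _
    have hbp : 0 ≤ b := Real.sqrt_nonneg _
    have hcp : 0 < c := Real.sqrt_pos.2 (by linarith)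
    have hab : 2 * (a * b) < 2 * (i : ℝ) + 1 := by
      nlinarith [mul_nonneg hap hbp, sq_nonneg (a * b)]
    have key : a + b < 2 * c := by
      nlinarith [mul_nonneg hap hbp]
    push_cast
    linarith
end
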